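/- Let T be a nonzero positive semidefinite self-adjoint operator on an n-dimensional inner product space with rank ≤ n/2. Then there exist an idempotent P and a positive real v such that T = v² P*P. -/

import Mathlib

theorem stmt_8 {𝕜 E : Type*} [RCLike 𝕜] [NormedAddCommGroup E]
    [InnerProductSpace 𝕜 E] [FiniteDimensional 𝕜 E]
    (T : E →ₗ[𝕜] E) (hT : T ≠ 0) (hsa : T.IsSymmetric)
    (hpos : ∀ x : E, 0 ≤ RCLike.re (inner 𝕜 (T x) x : 𝕜))
    (hrank : 2 * Module.finrank 𝕜 (LinearMap.range T) ≤ Module.finrank 𝕜 E) :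
    ∃ (P : E →ₗ[𝕜] E) (v : ℝ), 0 < v ∧ P ∘ₗ P = P ∧
      T = ((v ^ 2 : ℝ) : 𝕜) • ((LinearMap.adjoint P) ∘ₗ P) := by
  classical
  haveI := FiniteDimensional.complete 𝕜 E
  set n := Module.finrank 𝕜 E with hn
  let b : OrthonormalBasis (Fin n) 𝕜 E := hsa.eigenvectorBasis rfl
  let μ : Fin n → ℝ := hsa.eigenvalues rfl
  have hb : ∀ i, T (b i) = (μ i : 𝕜) • b i := fun i => hsa.apply_eigenvectorBasis rfl i
  have hob : ∀ i j, (inner 𝕜 (b i) (b j) : 𝕜) = if i = j then 1 else 0 :=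
    orthonormal_iff_ite.mp b.orthonormal
  -- eigenvalues are nonnegative
  have hμ0 : ∀ i, 0 ≤ μ i := by
    intro i
    have h := hpos (b i)
    rw [hb i, inner_smul_left, hob i i] at h
    simpa using h
  -- the finset of indices with nonzero eigenvalue
  set Sf : Finset (Fin n) := Finset.univ.filter (fun i => μ i ≠ 0) with hSf
  have hmem : ∀ i, i ∈ Sf ↔ μ i ≠ 0 := by
    intro i; simp [hSf]
  have hSfne : Sf.Nonempty := by
    by_contra h
    apply hT
    apply Module.Basis.ext b.toBasis
    intro i
    have : μ i = 0 := by
      by_contra hi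
      exact h ⟨i, (hmem i).mpr hi⟩
    simp [hb i, this]
  -- card Sf ≤ rank T
  have hcard : Sf.card ≤ Module.finrank 𝕜 (LinearMap.range T) := by
    have hmemrange : ∀ i : {x // x ∈ Sf}, b i ∈ LinearMap.range T := by
      rintro ⟨i, hi⟩
      refine ⟨((μ i : 𝕜)⁻¹ : 𝕜) • b i, ?_⟩
      have hμ : (μ i : 𝕜) ≠ 0 := by
        exact_mod_cast RCLike.ofReal_ne_zero.mpr ((hmem i).mp hi)
      rw [map_smul, hb i, smul_smul, inv_mul_cancel₀ hμ, one_smul]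
    have hli : LinearIndependent 𝕜 (fun i : {x // x ∈ Sf} => b i) :=
      (b.orthonormal.linearIndependent).comp _ Subtype.val_injective
    have hli2 : LinearIndependent 𝕜
        (fun i : {x // x ∈ Sf} => (⟨b i, hmemrange i⟩ : LinearMap.range T)) := by
      apply LinearIndependent.of_comp (LinearMap.range T).subtype
      exact hli
    have := hli2.fintype_card_le_finrank
    simpa [Fintype.card_coe] using this
  -- injection from Sf into its complement
  have hcard2 : Fintype.card {x // x ∈ Sf} ≤ Fintype.card {x // x ∈ Sfᶜ} := by
    rw [Fintype.card_coe, Fintype.card_coe, Finset.card_compl, Fintype.card_fin]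
    omega
  obtain ⟨f⟩ : Nonempty ({x // x ∈ Sf} ↪ {x // x ∈ Sfᶜ}) :=
    Function.Embedding.nonempty_iff_card_le.mpr hcard2
  have hfS : ∀ i : {x // x ∈ Sf}, μ (f i : Fin n) = 0 := by
    intro i
    have : (f i : Fin n) ∈ Sfᶜ := (f i).2
    rw [Finset.mem_compl, hmem] at this
    simpa using this
  -- minimum nonzero eigenvalue
  set m : ℝ := Sf.inf' hSfne μ with hm
  have hmle : ∀ i ∈ Sf, m ≤ μ i := fun i hi => Finset.inf'_le μ hi
  have hmpos : 0 < m := by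
    rw [hm, Finset.lt_inf'_iff]
    intro i hi
    exact lt_of_le_of_ne (hμ0 i) (Ne.symm ((hmem i).mp hi))
  -- coefficients
  set c : Fin n → ℝ := fun i => Real.sqrt (μ i / m - 1) with hc
  have hcsq : ∀ i ∈ Sf, c i ^ 2 = μ i / m - 1 := by
    intro i hi
    apply Real.sq_sqrt
    rw [sub_nonneg, le_div_iff₀ hmpos, one_mul]
    exact hmle i hi
  -- the map P
  set g : Fin n → E := fun i =>
    if h : i ∈ Sf then b i + ((c i : 𝕜)) • b (f ⟨i, h⟩ : Fin n) else 0 with hg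
  set P : E →ₗ[𝕜] E := b.toBasis.constr 𝕜 g with hPdef
  have hP : ∀ i, P (b i) = g i := by
    intro i
    have h := b.toBasis.constr_basis 𝕜 g i
    rwa [OrthonormalBasis.coe_toBasis] at h
  have hPP : P ∘ₗ P = P := by
    apply Module.Basis.ext b.toBasis
    intro i
    simp only [LinearMap.comp_apply, OrthonormalBasis.coe_toBasis, hP]
    by_cases hi : i ∈ Sf
    · rw [hg]
      simp only [dif_pos hi]
      rw [map_add, map_smul]
      have h1 : P (b i) = g i := hP i
      have h2 : P (b (f ⟨i, hi⟩ : Fin n)) = 0 := by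
        rw [hP, hg]
        have : (f ⟨i, hi⟩ : Fin n) ∉ Sf := by
          rw [hmem]
          simpa using hfS ⟨i, hi⟩
        simp [this]
      rw [h1, h2, smul_zero, add_zero, hg]
      simp [dif_pos hi]
    · simp [hg, dif_neg hi]
  -- key inner product computation
  have hinner : ∀ k i, (inner 𝕜 (g k) (g i) : 𝕜) =
      if k = i ∧ i ∈ Sf then ((1 + c i ^ 2 : ℝ) : 𝕜) else 0 := by
    intro k i
    by_cases hi : i ∈ Sf
    · by_cases hk : k ∈ Sf
      · rw [hg]
        simp only [dif_pos hi, dif_pos hk]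
        have hk' : (f ⟨k, hk⟩ : Fin n) ∉ Sf := by rw [hmem]; simpa using hfS ⟨k, hk⟩
        have hi' : (f ⟨i, hi⟩ : Fin n) ∉ Sf := by rw [hmem]; simpa using hfS ⟨i, hi⟩
        rw [inner_add_right, inner_add_left, inner_add_left, inner_smul_right,
          inner_smul_left, inner_smul_left, inner_smul_right, hob, hob, hob, hob]
        by_cases hki : k = i
        · have e1 : ¬ (k = (↑(f ⟨i, hi⟩) : Fin n)) := fun h => hi' (by rw [← h]; exact hk)
          have e2 : ¬ ((↑(f ⟨k, hk⟩) : Fin n) = i) := fun h => hk' (by rw [h]; exact hi)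
          have e3 : (↑(f ⟨k, hk⟩) : Fin n) = ↑(f ⟨i, hi⟩) := by cases hki; rfl
          rw [if_pos hki, if_neg e1, if_neg e2, if_pos e3, if_pos ⟨hki, hi⟩, hki,
            RCLike.conj_ofReal]
          push_cast
          ring
        · have e1 : ¬ (k = (↑(f ⟨i, hi⟩) : Fin n)) := fun h => hi' (by rw [← h]; exact hk)
          have e2 : ¬ ((↑(f ⟨k, hk⟩) : Fin n) = i) := fun h => hk' (by rw [h]; exact hi)
          have e3 : ¬ ((↑(f ⟨k, hk⟩) : Fin n) = ↑(f ⟨i, hi⟩)) := fun h =>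
            hki (congrArg Subtype.val (f.injective (Subtype.ext h)))
          rw [if_neg hki, if_neg e1, if_neg e2, if_neg e3, if_neg (fun h => hki h.1)]
          simp
      · rw [hg]
        simp only [dif_neg hk]
        rw [inner_zero_left]
        have : ¬ (k = i ∧ i ∈ Sf) := by
          rintro ⟨rfl, _⟩; exact hk hi
        rw [if_neg this]
    · rw [hg]
      simp only [dif_neg hi, inner_zero_right]
      have : ¬ (k = i ∧ i ∈ Sf) := fun h => hi h.2
      rw [if_neg this]
  refine ⟨P, Real.sqrt m, Real.sqrt_pos.mpr hmpos, hPP, ?_⟩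
  rw [Real.sq_sqrt hmpos.le]
  apply Module.Basis.ext b.toBasis
  intro i
  apply InnerProductSpace.ext_inner_left_basis b.toBasis
  intro k
  simp only [OrthonormalBasis.coe_toBasis, LinearMap.smul_apply, LinearMap.comp_apply]
  rw [hb i, inner_smul_right, inner_smul_right, LinearMap.adjoint_inner_right, hP, hP,
    hinner, hob]
  by_cases hki : k = i
  · subst hki
    by_cases hk : k ∈ Sf
    · rw [if_pos rfl, if_pos ⟨rfl, hk⟩]
      have : m * (1 + c k ^ 2) = μ k := by
        rw [hcsq k hk]
        field_simp
        ring
      rw [mul_one]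
      rw [← this]
      push_cast
      ring
    · have : μ k = 0 := by
        by_contra h
        exact hk ((hmem k).mpr h)
      rw [this]
      have : ¬ (k = k ∧ k ∈ Sf) := fun h => hk h.2
      rw [if_neg this]
      simp
  · rw [if_neg hki]
    have : ¬ (k = i ∧ i ∈ Sf) := fun h => hki h.1
    rw [if_neg this]
    simp
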